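/- Let 𝕀 be a nonempty bounded connected open subset of ℝⁿ such that ℝⁿ ∖ cl 𝕀 is connected and cl 𝕀 ⊆ Q. Let u : cl 𝕊[𝕀]⁻ → ℝ be continuous, q-periodic, twice continuously differentiable on 𝕊[𝕀]⁻, and harmonic on 𝕊[𝕀]⁻. If there exists a point x₀ ∈ 𝕊[𝕀]⁻ such that u(x₀) = max_{cl 𝕊[𝕀]⁻} u (i.e. u(x₀) ≥ u(x) for all x ∈ cl 𝕊[𝕀]⁻), then u is constant on 𝕊[𝕀]⁻. -/

import Mathlib

open MeasureTheory Real
open scoped BigOperators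

noncomputable section

/-- The point `q z` of the lattice `q ℤⁿ`. -/
def latticePt (n : ℕ) (qd : Fin n → ℝ) (z : Fin n → ℤ) : EuclideanSpace ℝ (Fin n) :=
  WithLp.toLp 2 (fun j => qd j * (z j : ℝ))

/-- The fundamental periodicity cell `Q = ∏_j (0, q_{jj})`. -/
def cellQ (n : ℕ) (qd : Fin n → ℝ) : Set (EuclideanSpace ℝ (Fin n)) :=
  {x | ∀ j, x j ∈ Set.Ioo 0 (qd j)}

/-- The periodically perforated domain `𝕊[𝕀]⁻ = ℝⁿ ∖ ⋃_{z ∈ ℤⁿ} cl(qz + 𝕀)`. -/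
def perfDom (n : ℕ) (qd : Fin n → ℝ) (I : Set (EuclideanSpace ℝ (Fin n))) :
    Set (EuclideanSpace ℝ (Fin n)) :=
  (⋃ z : Fin n → ℤ, closure ((latticePt n qd z + ·) '' I))ᶜ

/-- The Laplacian `Δu(x) = ∑_j ∂²u/∂x_j²(x)`. -/
def laplacian (n : ℕ) (u : EuclideanSpace ℝ (Fin n) → ℝ) (x : EuclideanSpace ℝ (Fin n)) : ℝ :=
  ∑ j : Fin n,
    fderiv ℝ (fun y => fderiv ℝ u y (EuclideanSpace.single j (1 : ℝ))) x
      (EuclideanSpace.single j (1 : ℝ))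

open Filter

abbrev ES (n : ℕ) := EuclideanSpace ℝ (Fin n)

lemma hasDerivAt_line {n : ℕ} {f : ES n → ℝ} {x e : ES n} {t : ℝ}
    (hf : DifferentiableAt ℝ f (x + t • e)) :
    HasDerivAt (fun s : ℝ => f (x + s • e)) (fderiv ℝ f (x + t • e) e) t := by
  have hline : HasDerivAt (fun s : ℝ => x + s • e) e t := by
    simpa using ((hasDerivAt_id t).smul_const e).const_add x
  simpa [Function.comp_def] using (hf.hasFDerivAt.comp_hasDerivAt t hline)

lemma diff_fderiv_apply {n : ℕ} {f : ES n → ℝ} {x : ES n} (e : ES n)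
    (hf : ContDiffAt ℝ 2 f x) :
    HasFDerivAt (fun y => fderiv ℝ f y e)
      ((fderiv ℝ (fun y => fderiv ℝ f y e) x)) x := by
  have h1 : ContDiffAt ℝ 1 (fderiv ℝ f) x := hf.fderiv_right (by norm_num)
  have h2 : DifferentiableAt ℝ (fderiv ℝ f) x := h1.differentiableAt one_ne_zero
  have h3 : DifferentiableAt ℝ (fun y => fderiv ℝ f y e) x :=
    h2.clm_apply (differentiableAt_const e)
  exact h3.hasFDerivAt

lemma second_deriv_test {g g' : ℝ → ℝ} {d : ℝ}
    (hg : ∀ᶠ t in nhds (0:ℝ), HasDerivAt g (g' t) t)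
    (hg'0 : g' 0 = 0) (hd : HasDerivAt g' d 0) (hdpos : 0 < d)
    (hmax : IsLocalMax g 0) : False := by
  have hslope : Tendsto (slope g' 0) (nhdsWithin (0:ℝ) {(0:ℝ)}ᶜ) (nhds d) :=
    hasDerivAt_iff_tendsto_slope.mp hd
  have h1 : ∀ᶠ t in nhdsWithin (0:ℝ) {(0:ℝ)}ᶜ, 0 < slope g' 0 t :=
    hslope.eventually (eventually_gt_nhds hdpos)
  -- hence g' t > 0 for t in (0, ε₁)
  have h2 : ∀ᶠ t in nhdsWithin (0:ℝ) (Set.Ioi 0), 0 < g' t := by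
    have hsub : nhdsWithin (0:ℝ) (Set.Ioi 0) ≤ nhdsWithin (0:ℝ) {(0:ℝ)}ᶜ :=
      nhdsWithin_mono 0 (fun t ht => ne_of_gt ht)
    filter_upwards [h1.filter_mono hsub, self_mem_nhdsWithin] with t ht ht'
    have htpos : (0:ℝ) < t := ht'
    have : 0 < (g' t - g' 0) / (t - 0) := by simpa [slope_def_field] using ht
    rw [hg'0, sub_zero, sub_zero] at this
    exact (div_pos_iff.mp this).resolve_right (fun h => absurd htpos (not_lt.mpr h.2.le)) |>.1
  -- choose ε
  rcases mem_nhdsGT_iff_exists_Ioo_subset.mp h2 with ⟨ε₁, hε₁', hg'pos⟩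
  have hε₁ : (0:ℝ) < ε₁ := hε₁'
  clear hε₁' 
  rcases Metric.eventually_nhds_iff.mp (hg.and hmax) with ⟨ε₂, hε₂, hball⟩
  set ε := min ε₁ ε₂ / 2 with hε
  have hεpos : 0 < ε := by positivity
  have hεlt₁ : ε < ε₁ := by
    have h := min_le_left ε₁ ε₂
    have h2 := lt_min hε₁ hε₂
    rw [hε]; linarith
  have hεlt₂ : ε < ε₂ := by
    have h := min_le_right ε₁ ε₂
    have h2 := lt_min hε₁ hε₂
    rw [hε]; linarith
  have hIcc : Set.Icc (0:ℝ) ε ⊆ Metric.ball (0:ℝ) ε₂ := by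
    intro t ht
    simp only [Metric.mem_ball, Real.dist_eq, sub_zero]
    rw [abs_of_nonneg ht.1]; exact lt_of_le_of_lt ht.2 hεlt₂
  have hcont : ContinuousOn g (Set.Icc 0 ε) := fun t ht =>
    ((hball (hIcc ht)).1.continuousAt).continuousWithinAt
  have hderivpos : ∀ t ∈ interior (Set.Icc (0:ℝ) ε), 0 < deriv g t := by
    intro t ht
    rw [interior_Icc] at ht
    have h01 : t ∈ Set.Ioo 0 ε₁ := ⟨ht.1, lt_trans ht.2 hεlt₁⟩
    have hgd := (hball (hIcc ⟨ht.1.le, ht.2.le⟩)).1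
    rw [hgd.deriv]
    exact hg'pos h01
  have hsm := strictMonoOn_of_deriv_pos (convex_Icc 0 ε) hcont hderivpos
  have hlt : g 0 < g ε :=
    hsm (Set.left_mem_Icc.mpr hεpos.le) (Set.right_mem_Icc.mpr hεpos.le) hεpos
  have hle : g ε ≤ g 0 := (hball (hIcc (Set.right_mem_Icc.mpr hεpos.le))).2
  linarith

/-- Weak maximum principle: at a local max of a C² function, the Laplacian is `≤ 0`. -/
lemma laplacian_nonpos_of_isLocalMax {n : ℕ} {f : ES n → ℝ} {U : Set (ES n)} {x : ES n}
    (hU : IsOpen U) (hx : x ∈ U) (hf : ContDiffOn ℝ 2 f U) (hmax : IsLocalMax f x) :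
    laplacian n f x ≤ 0 := by
  have hfx : ContDiffAt ℝ 2 f x := hf.contDiffAt (hU.mem_nhds hx)
  have key : ∀ j : Fin n,
      fderiv ℝ (fun y => fderiv ℝ f y (EuclideanSpace.single j (1:ℝ))) x
        (EuclideanSpace.single j (1:ℝ)) ≤ 0 := by
    intro j
    set e : ES n := EuclideanSpace.single j (1:ℝ) with he
    by_contra hpos
    push_neg at hpos
    set g' : ℝ → ℝ := fun t => fderiv ℝ f (x + t • e) e with hg'
    have hline : Continuous (fun t : ℝ => x + t • e) := by continuity
    have hg : ∀ᶠ t in nhds (0:ℝ), HasDerivAt (fun s : ℝ => f (x + s • e)) (g' t) t := by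
      have hmem : ∀ᶠ t in nhds (0:ℝ), x + t • e ∈ U := by
        have h0 : (fun t : ℝ => x + t • e) 0 = x := by simp
        have := hline.continuousAt (x := (0:ℝ))
        exact this (hU.mem_nhds (by rw [h0]; exact hx))
      filter_upwards [hmem] with t ht
      exact hasDerivAt_line ((hf.contDiffAt (hU.mem_nhds ht)).differentiableAt (by norm_num))
    have hg'0 : g' 0 = 0 := by
      have := hmax.fderiv_eq_zero
      simp [hg', this]
    have hd : HasDerivAt g' (fderiv ℝ (fun y => fderiv ℝ f y e) x e) 0 := by
      have hline0 : HasDerivAt (fun s : ℝ => x + s • e) e 0 := by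
        simpa using ((hasDerivAt_id (0:ℝ)).smul_const e).const_add x
      have h2 : HasFDerivAt (fun y => fderiv ℝ f y e)
          ((fderiv ℝ (fun y => fderiv ℝ f y e) x)) (x + (0:ℝ) • e) := by
        simpa using diff_fderiv_apply e hfx
      have := h2.comp_hasDerivAt 0 hline0
      simpa [Function.comp_def] using this
    have hgmax : IsLocalMax (fun s : ℝ => f (x + s • e)) 0 := by
      have h0 : (fun t : ℝ => x + t • e) 0 = x := by simp
      have htend : Filter.Tendsto (fun t : ℝ => x + t • e) (nhds 0) (nhds x) := by
        have h2 := hline.continuousAt (x := (0:ℝ))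
        unfold ContinuousAt at h2
        rwa [h0] at h2
      have : ∀ᶠ t in nhds (0:ℝ), f (x + t • e) ≤ f x := htend.eventually hmax
      unfold IsLocalMax IsMaxFilter
      simpa using this
    exact second_deriv_test hg hg'0 hd hpos hgmax
  exact Finset.sum_nonpos fun j _ => key j

def sqd {n : ℕ} (c : ES n) (x : ES n) : ℝ := ∑ j, (x j - c j)^2

def sqd' {n : ℕ} (c : ES n) (x : ES n) : ES n →L[ℝ] ℝ :=
  ∑ j, (2*(x j - c j)) • (EuclideanSpace.proj j : ES n →L[ℝ] ℝ)

lemma hasFDerivAt_sqd {n : ℕ} (c x : ES n) : HasFDerivAt (sqd c) (sqd' c x) x := by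
  have h : ∀ j : Fin n, HasFDerivAt (fun y : ES n => (y j - c j)^2)
      ((2*(x j - c j)) • (EuclideanSpace.proj j : ES n →L[ℝ] ℝ)) x := by
    intro j
    have h1 : HasDerivAt (fun t : ℝ => (t - c j)^2) (2*(x j - c j)) (x j) := by
      have := ((hasDerivAt_id (x j)).sub_const (c j)).fun_pow 2
      simpa [mul_comm] using this
    have h2 : HasFDerivAt (fun y : ES n => y j) (EuclideanSpace.proj j : ES n →L[ℝ] ℝ) x :=
      (EuclideanSpace.proj j : ES n →L[ℝ] ℝ).hasFDerivAt
    have := h1.comp_hasFDerivAt x h2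
    simpa [Function.comp_def] using this
  have := HasFDerivAt.fun_sum (fun j (_ : j ∈ Finset.univ) => h j)
  unfold sqd; simpa [sqd'] using this

lemma sqd'_single {n : ℕ} (c x : ES n) (j : Fin n) :
    sqd' c x (EuclideanSpace.single j (1:ℝ)) = 2*(x j - c j) := by
  simp only [sqd', ContinuousLinearMap.sum_apply, ContinuousLinearMap.smul_apply,
    smul_eq_mul]
  rw [Finset.sum_eq_single j]
  · simp [EuclideanSpace.single_apply]
  · intro i _ hij
    simp [EuclideanSpace.single_apply, hij]
  · intro h; exact absurd (Finset.mem_univ j) h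

def wB {n : ℕ} (α β : ℝ) (c : ES n) (x : ES n) : ℝ := rexp (-(α * sqd c x)) - β

lemma hasFDerivAt_wB {n : ℕ} (α β : ℝ) (c x : ES n) :
    HasFDerivAt (wB α β c) ((-α * rexp (-(α * sqd c x))) • sqd' c x) x := by
  have h1 : HasDerivAt (fun t : ℝ => rexp (-(α * t)) - β)
      (-α * rexp (-(α * sqd c x))) (sqd c x) := by
    have h2 : HasDerivAt (fun t : ℝ => -(α * t)) (-α) (sqd c x) := by
      simpa using ((hasDerivAt_id (sqd c x)).const_mul α).fun_neg
    have := (h2.exp).sub_const β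
    simpa [mul_comm] using this
  have := h1.comp_hasFDerivAt x (hasFDerivAt_sqd c x)
  unfold wB; exact this

lemma contDiff_sqd {n : ℕ} (c : ES n) : ContDiff ℝ 2 (sqd c) := by
  unfold sqd
  apply ContDiff.sum
  intro j _
  have hproj : ContDiff ℝ 2 (fun y : ES n => y j) :=
    (EuclideanSpace.proj j : ES n →L[ℝ] ℝ).contDiff
  exact (hproj.sub contDiff_const).pow 2

lemma contDiff_wB {n : ℕ} (α β : ℝ) (c : ES n) : ContDiff ℝ 2 (wB α β c) := by
  unfold wB
  exact ((((contDiff_sqd c).const_smul α).neg).exp).sub contDiff_const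

lemma fderiv_wB_single {n : ℕ} (α β : ℝ) (c : ES n) (y : ES n) (j : Fin n) :
    fderiv ℝ (wB α β c) y (EuclideanSpace.single j (1:ℝ))
      = -α * rexp (-(α * sqd c y)) * (2*(y j - c j)) := by
  rw [(hasFDerivAt_wB α β c y).fderiv]
  simp [sqd'_single]

lemma hasFDerivAt_gj {n : ℕ} (α β : ℝ) (c : ES n) (x : ES n) (j : Fin n) :
    HasFDerivAt (fun y : ES n => -α * rexp (-(α * sqd c y)) * (2*(y j - c j)))
      (((2*(x j - c j)) • ((-α * rexp (-(α * sqd c x))) • ((-α) • sqd' c x))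
        + (-α * rexp (-(α * sqd c x))) • ((2:ℝ) • (EuclideanSpace.proj j : ES n →L[ℝ] ℝ)))) x := by
  have h1 : HasFDerivAt (fun y : ES n => -α * rexp (-(α * sqd c y)))
      ((-α * rexp (-(α * sqd c x))) • ((-α) • sqd' c x)) x := by
    have hexp : HasDerivAt (fun t : ℝ => -α * rexp (-(α * t)))
        (-α * (rexp (-(α * sqd c x)) * -α)) (sqd c x) := by
      have h2 : HasDerivAt (fun t : ℝ => -(α * t)) (-α) (sqd c x) := by
        simpa using ((hasDerivAt_id (sqd c x)).const_mul α).fun_neg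
      exact (h2.exp).const_mul (-α)
    have := hexp.comp_hasFDerivAt x (hasFDerivAt_sqd c x)
    apply this.congr_fderiv
    ext v
    simp [ContinuousLinearMap.smul_apply, smul_eq_mul]
    ring
  have h2 : HasFDerivAt (fun y : ES n => 2*(y j - c j))
      ((2:ℝ) • (EuclideanSpace.proj j : ES n →L[ℝ] ℝ)) x := by
    have hp : HasFDerivAt (fun y : ES n => y j) (EuclideanSpace.proj j : ES n →L[ℝ] ℝ) x :=
      (EuclideanSpace.proj j : ES n →L[ℝ] ℝ).hasFDerivAt
    have := (hp.sub_const (c j)).const_mul (2:ℝ)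
    simpa [smul_smul] using this
  simpa [add_comm] using h1.fun_mul h2

lemma laplacian_wB {n : ℕ} (α β : ℝ) (c : ES n) (x : ES n) :
    laplacian n (wB α β c) x
      = rexp (-(α * sqd c x)) * (4*α^2 * sqd c x - 2*α*n) := by
  unfold laplacian
  have hterm : ∀ j : Fin n,
      fderiv ℝ (fun y => fderiv ℝ (wB α β c) y (EuclideanSpace.single j (1:ℝ))) x
        (EuclideanSpace.single j (1:ℝ))
      = rexp (-(α * sqd c x)) * (4*α^2 * (x j - c j)^2 - 2*α) := by
    intro j
    have hfun : (fun y => fderiv ℝ (wB α β c) y (EuclideanSpace.single j (1:ℝ)))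
        = fun y : ES n => -α * rexp (-(α * sqd c y)) * (2*(y j - c j)) := by
      funext y; exact fderiv_wB_single α β c y j
    rw [hfun, (hasFDerivAt_gj α β c x j).fderiv]
    have hsj : sqd' c x (EuclideanSpace.single j (1:ℝ)) = 2*(x j - c j) := sqd'_single c x j
    have hpj : (EuclideanSpace.proj j : ES n →L[ℝ] ℝ) (EuclideanSpace.single j (1:ℝ)) = 1 := by
      simp [EuclideanSpace.single_apply]
    simp only [ContinuousLinearMap.add_apply, ContinuousLinearMap.smul_apply, smul_eq_mul,
      hsj, hpj]
    ring
  rw [Finset.sum_congr rfl (fun j _ => hterm j)]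
  rw [← Finset.mul_sum]
  congr 1
  rw [Finset.sum_sub_distrib, ← Finset.mul_sum]
  simp [sqd, Finset.sum_const, Finset.card_univ]
  ring



lemma laplacian_add_mul {n : ℕ} {f : ES n → ℝ} {U : Set (ES n)} {x : ES n}
    (hU : IsOpen U) (hx : x ∈ U) (hf : ContDiffOn ℝ 2 f U) (α β ε : ℝ) (c : ES n) :
    laplacian n (fun y => f y + ε * wB α β c y) x
      = laplacian n f x + ε * laplacian n (wB α β c) x := by
  unfold laplacian
  have hterm : ∀ j : Fin n,
      fderiv ℝ (fun y => fderiv ℝ (fun y' => f y' + ε * wB α β c y') y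
          (EuclideanSpace.single j (1:ℝ))) x (EuclideanSpace.single j (1:ℝ))
      = fderiv ℝ (fun y => fderiv ℝ f y (EuclideanSpace.single j (1:ℝ))) x
          (EuclideanSpace.single j (1:ℝ))
        + ε * fderiv ℝ (fun y => fderiv ℝ (wB α β c) y (EuclideanSpace.single j (1:ℝ))) x
          (EuclideanSpace.single j (1:ℝ)) := by
    intro j
    set e : ES n := EuclideanSpace.single j (1:ℝ) with he
    have hev : (fun y => fderiv ℝ (fun y' => f y' + ε * wB α β c y') y e)
        =ᶠ[nhds x] (fun y => fderiv ℝ f y e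
          + ε * (-α * rexp (-(α * sqd c y)) * (2*(y j - c j)))) := by
      filter_upwards [hU.mem_nhds hx] with y hy
      have hdf : DifferentiableAt ℝ f y :=
        (hf.contDiffAt (hU.mem_nhds hy)).differentiableAt two_ne_zero
      have hdw : DifferentiableAt ℝ (wB α β c) y := (hasFDerivAt_wB α β c y).differentiableAt
      have heq : fderiv ℝ (fun y' => f y' + ε * wB α β c y') y
          = fderiv ℝ f y + ε • fderiv ℝ (wB α β c) y := by
        rw [fderiv_fun_add hdf (hdw.const_mul ε), fderiv_const_mul hdw]
      rw [heq]
      simp only [ContinuousLinearMap.add_apply, ContinuousLinearMap.smul_apply, smul_eq_mul]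
      rw [fderiv_wB_single α β c y j]
    rw [hev.fderiv_eq]
    have hd1 : DifferentiableAt ℝ (fun y => fderiv ℝ f y e) x :=
      (diff_fderiv_apply e (hf.contDiffAt (hU.mem_nhds hx))).differentiableAt
    have hd2 : DifferentiableAt ℝ
        (fun y : ES n => -α * rexp (-(α * sqd c y)) * (2*(y j - c j))) x :=
      (hasFDerivAt_gj α β c x j).differentiableAt
    rw [fderiv_fun_add hd1 (hd2.const_mul ε), fderiv_const_mul hd2]
    simp only [ContinuousLinearMap.add_apply, ContinuousLinearMap.smul_apply, smul_eq_mul]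
    congr 2
    have hfun : (fun y => fderiv ℝ (wB α β c) y e)
        = fun y : ES n => -α * rexp (-(α * sqd c y)) * (2*(y j - c j)) := by
      funext y; exact fderiv_wB_single α β c y j
    rw [hfun]
  rw [Finset.sum_congr rfl (fun j _ => hterm j), Finset.sum_add_distrib, ← Finset.mul_sum]


lemma sqd_eq_dist {n : ℕ} (c x : ES n) : sqd c x = dist x c ^ 2 := by
  rw [EuclideanSpace.dist_eq, Real.sq_sqrt (by positivity)]
  unfold sqd
  congr 1; funext j; rw [Real.dist_eq, sq_abs]

lemma sqd'_apply {n : ℕ} (c x v : ES n) :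
    sqd' c x v = ∑ j, 2*(x j - c j) * v j := by
  simp [sqd', ContinuousLinearMap.sum_apply]

set_option maxHeartbeats 2000000 in
lemma hopf {n : ℕ} (hn : 0 < n) {U : Set (ES n)} {u : ES n → ℝ} {M : ℝ}
    (hU : IsOpen U) (hu : ContinuousOn u (closure U)) (hC2 : ContDiffOn ℝ 2 u U)
    (hharm : ∀ x ∈ U, laplacian n u x = 0)
    (hle : ∀ x ∈ closure U, u x ≤ M)
    {y p : ES n} {r : ℝ} (hr : 0 < r)
    (hball : Metric.ball y r ⊆ U) (hballlt : ∀ x ∈ Metric.ball y r, u x < M)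
    (hp : p ∈ U) (hpr : dist p y = r) (hup : u p = M) : False := by
  have hnontriv : Nontrivial (ES n) := by
    refine ⟨0, EuclideanSpace.single ⟨0, hn⟩ 1, fun h => ?_⟩
    have := congrArg (fun f : ES n => f ⟨0, hn⟩) h
    simp [EuclideanSpace.single_apply] at this
  set α : ℝ := 2*n/r^2 with hα
  have hαpos : 0 < α := by positivity
  set β : ℝ := rexp (-(α * r^2)) with hβ
  set w : ES n → ℝ := wB α β y with hw
  have hwle1 : ∀ x : ES n, w x ≤ 1 := by
    intro x
    have h1 : rexp (-(α * sqd y x)) ≤ 1 := by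
      rw [Real.exp_le_one_iff]
      have : 0 ≤ sqd y x := by rw [sqd_eq_dist]; positivity
      nlinarith
    have h2 : 0 < β := Real.exp_pos _
    simp only [hw, wB]; linarith
  have hw0 : ∀ x : ES n, dist x y = r → w x = 0 := by
    intro x hx
    simp only [hw, wB, hβ, sqd_eq_dist, hx]
    ring_nf
  -- closure of ball ⊆ closure U
  have hclball : Metric.closedBall y r ⊆ closure U := by
    rw [← closure_ball y hr.ne']
    exact closure_mono hball
  -- inner sphere max
  have hsph : (Metric.sphere y (r/2)).Nonempty :=
    NormedSpace.sphere_nonempty.mpr (by positivity)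
  have hsphsub : Metric.sphere y (r/2) ⊆ Metric.ball y r := fun x hx => by
    have : dist x y = r/2 := hx
    simp [Metric.mem_ball, this]; linarith
  have hsphcpt : IsCompact (Metric.sphere y (r/2)) := isCompact_sphere _ _
  obtain ⟨z₀, hz₀mem, hz₀max⟩ := hsphcpt.exists_isMaxOn hsph
    (hu.mono (fun x hx => subset_closure (hball (hsphsub hx))))
  set δ : ℝ := M - u z₀ with hδ
  have hδpos : 0 < δ := by
    have := hballlt z₀ (hsphsub hz₀mem)
    simp only [hδ]; linarith
  set ε : ℝ := δ/2 with hε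
  have hεpos : 0 < ε := by positivity
  set v : ES n → ℝ := fun x => u x + ε * w x with hv
  -- annulus
  set A : Set (ES n) := Metric.closedBall y r \ Metric.ball y (r/2) with hA
  have hAcpt : IsCompact A := (isCompact_closedBall y r).diff Metric.isOpen_ball
  have hpA : p ∈ A := by
    constructor
    · simp [Metric.mem_closedBall, hpr]
    · simp [Metric.mem_ball, hpr]; linarith
  have hAcl : A ⊆ closure U := fun x hx => hclball hx.1
  have hvcont : ContinuousOn v A := by
    apply ContinuousOn.add (hu.mono hAcl)
    exact (continuous_const.mul (contDiff_wB α β y).continuous).continuousOn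
  obtain ⟨m, hmA, hmmax⟩ := hAcpt.exists_isMaxOn ⟨p, hpA⟩ hvcont
  -- the maximum point is not in the open annulus
  have hnotmid : ¬ (r/2 < dist m y ∧ dist m y < r) := by
    rintro ⟨hm1, hm2⟩
    set O : Set (ES n) := Metric.ball y r ∩ (Metric.closedBall y (r/2))ᶜ with hO
    have hOopen : IsOpen O := Metric.isOpen_ball.inter (Metric.isClosed_closedBall.isOpen_compl)
    have hmO : m ∈ O := by
      constructor
      · simpa [Metric.mem_ball] using hm2
      · simp [Metric.mem_closedBall]; linarith
    have hOA : O ⊆ A := by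
      rintro x ⟨hx1, hx2⟩
      simp only [Metric.mem_closedBall, Set.mem_compl_iff, not_le, Metric.mem_ball] at hx1 hx2
      exact ⟨Metric.mem_closedBall.mpr hx1.le, by simp [Metric.mem_ball]; linarith⟩
    have hOU : O ⊆ U := fun x hx => hball hx.1
    have hlocmax : IsLocalMax v m := by
      filter_upwards [hOopen.mem_nhds hmO] with x hx
      exact hmmax (hOA hx)
    have hvC2 : ContDiffOn ℝ 2 v O :=
      (hC2.mono hOU).add ((contDiff_const.mul (contDiff_wB α β y)).contDiffOn)
    have hnonpos := laplacian_nonpos_of_isLocalMax hOopen hmO hvC2 hlocmax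
    have hmU : m ∈ U := hOU hmO
    have hlapv : laplacian n v m = laplacian n u m + ε * laplacian n (wB α β y) m :=
      laplacian_add_mul hU hmU hC2 α β ε y
    have hlapw := laplacian_wB α β y m
    have hsqd : sqd y m = dist m y ^ 2 := sqd_eq_dist y m
    have hpos : 0 < laplacian n v m := by
      rw [hlapv, hharm m hmU, hlapw, zero_add]
      apply mul_pos hεpos
      apply mul_pos (Real.exp_pos _)
      rw [hsqd]
      have h1 : (r/2)^2 < dist m y ^ 2 := by nlinarith [dist_nonneg (x := m) (y := y)]
      have h2 : α * r^2 = 2*n := by rw [hα]; field_simp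
      have h3 : 2*α*(n:ℝ) = α * (α * r^2) := by rw [h2]; ring
      have h4 : (0:ℝ) < 4*dist m y^2 - r^2 := by nlinarith
      nlinarith [mul_pos (mul_pos hαpos hαpos) h4]
    linarith
  -- v ≤ M on A, attained at p
  have hvle : ∀ x ∈ A, v x ≤ M := by
    intro x hx
    have hvm : v m ≤ M := by
      have hm1 : dist m y ≤ r := hmA.1
      have hm2 : r / 2 ≤ dist m y := by
        have := hmA.2
        simpa [Metric.mem_ball, not_lt] using this
      rcases eq_or_lt_of_le hm1 with heq | hlt
      · -- outer sphere
        have := hw0 m heq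
        simp only [hv, this, mul_zero, add_zero]
        exact hle m (hAcl hmA)
      · rcases eq_or_lt_of_le hm2 with heq2 | hlt2
        · -- inner sphere
          have hm_sph : m ∈ Metric.sphere y (r/2) := by
            exact Metric.mem_sphere.mpr heq2.symm
          have h1 : u m ≤ u z₀ := hz₀max hm_sph
          have h2 : w m ≤ 1 := hwle1 m
          have hεval : ε = (M - u z₀)/2 := rfl
          have hvmval : v m = u m + ε * w m := rfl
          rw [hvmval, hεval]
          nlinarith [hδpos, hεpos]
        · exact absurd ⟨hlt2, hlt⟩ hnotmid
    exact le_trans (hmmax hx) hvm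
  have hvp : v p = M := by simp [hv, hw0 p hpr, hup]
  -- directional derivative of v at p along p - y
  have hudiff : DifferentiableAt ℝ u p :=
    (hC2.contDiffAt (hU.mem_nhds hp)).differentiableAt two_ne_zero
  have hwdiff : DifferentiableAt ℝ (wB α β y) p := (hasFDerivAt_wB α β y p).differentiableAt
  have hulocmax : IsLocalMax u p := by
    filter_upwards [hU.mem_nhds hp] with x hx
    rw [hup]
    exact hle x (subset_closure hx)
  have hfderivu : fderiv ℝ u p = 0 := hulocmax.fderiv_eq_zero
  have hfderivv : fderiv ℝ v p = ε • fderiv ℝ (wB α β y) p := by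
    simp only [hv]
    rw [fderiv_fun_add hudiff (hwdiff.const_mul ε), fderiv_const_mul hwdiff, hfderivu, zero_add]
  set D : ℝ := fderiv ℝ v p (p - y) with hD
  have hsqdp : sqd y p = r^2 := by rw [sqd_eq_dist, hpr]
  have hDval : D = ε * ((-α * rexp (-(α * r^2))) * (2 * r^2)) := by
    rw [hD, hfderivv]
    simp only [ContinuousLinearMap.smul_apply, smul_eq_mul]
    congr 1
    rw [(hasFDerivAt_wB α β y p).fderiv]
    simp only [ContinuousLinearMap.smul_apply, smul_eq_mul, hsqdp]
    congr 1
    rw [sqd'_apply]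
    have : ∀ j : Fin n, (p - y) j = p j - y j := fun j => rfl
    have hsum : ∑ j, 2*(p j - y j) * (p - y) j = 2 * sqd y p := by
      simp only [this, sqd]
      rw [Finset.mul_sum]
      congr 1; funext j; ring
    rw [hsum, hsqdp]
  have hDneg : D < 0 := by
    rw [hDval]
    apply mul_neg_of_pos_of_neg hεpos
    apply mul_neg_of_neg_of_pos
    · exact mul_neg_of_neg_of_pos (by linarith) (Real.exp_pos _)
    · positivity
  -- but D ≥ 0 since v ≤ M = v p along the segment
  set φ : ℝ → ℝ := fun t => v (y + t • (p - y)) with hφ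
  have hφ1 : φ 1 = M := by simp [hφ, hvp]
  have hvdiffp : DifferentiableAt ℝ v p := hudiff.add (hwdiff.const_mul ε)
  have hφderiv : HasDerivAt φ D 1 := by
    have hline : HasDerivAt (fun t : ℝ => y + t • (p - y)) (p - y) 1 := by
      simpa using ((hasDerivAt_id (1:ℝ)).smul_const (p - y)).const_add y
    have h1 : y + (1:ℝ) • (p - y) = p := by simp
    have h2 : HasFDerivAt v (fderiv ℝ v p) (y + (1:ℝ) • (p - y)) := by
      rw [h1]; exact hvdiffp.hasFDerivAt
    simpa [hφ, hD, Function.comp_def] using h2.comp_hasDerivAt 1 hline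
  have hφle : ∀ t ∈ Set.Icc (1/2 : ℝ) 1, φ t ≤ M := by
    intro t ht
    have hmem : y + t • (p - y) ∈ A := by
      have hdist : dist (y + t • (p - y)) y = t * r := by
        rw [dist_eq_norm]
        simp only [add_sub_cancel_left]
        rw [norm_smul, Real.norm_eq_abs, abs_of_nonneg (by linarith [ht.1] : (0:ℝ) ≤ t)]
        rw [← hpr, dist_eq_norm]
      refine ⟨Metric.mem_closedBall.mpr ?_, fun hcon => ?_⟩
      · rw [hdist]; nlinarith [ht.2, hr]
      · rw [Metric.mem_ball, hdist] at hcon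
        nlinarith [ht.1, hr]
    exact hvle _ hmem
  have hDnonneg : 0 ≤ D := by
    have hslope : Filter.Tendsto (slope φ 1) (nhdsWithin 1 {(1:ℝ)}ᶜ) (nhds D) :=
      hasDerivAt_iff_tendsto_slope.mp hφderiv
    have hmono : nhdsWithin (1:ℝ) (Set.Iio 1) ≤ nhdsWithin 1 {(1:ℝ)}ᶜ :=
      nhdsWithin_mono 1 (fun t ht => ne_of_lt ht)
    have hslope2 : Filter.Tendsto (slope φ 1) (nhdsWithin (1:ℝ) (Set.Iio 1)) (nhds D) :=
      hslope.mono_left hmono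
    apply ge_of_tendsto hslope2
    have hIoo : Set.Ioo (1/2 : ℝ) 1 ∈ nhdsWithin (1:ℝ) (Set.Iio 1) :=
      Ioo_mem_nhdsLT_of_mem (by norm_num : (1:ℝ) ∈ Set.Ioc (1/2) 1)
    filter_upwards [hIoo] with t ht
    rw [slope_def_field, hφ1]
    have h1 : φ t ≤ M := hφle t ⟨ht.1.le, ht.2.le⟩
    have h2 : t - 1 < 0 := by linarith [ht.2]
    rw [div_nonneg_iff]
    right
    constructor <;> [linarith; linarith]
  linarith


/-! ### Topology of the perforated domain -/

def holeH (n : ℕ) (qd : Fin n → ℝ) (I : Set (ES n)) (z : Fin n → ℤ) : Set (ES n) :=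
  closure ((latticePt n qd z + ·) '' I)

def cellC (n : ℕ) (qd : Fin n → ℝ) (z : Fin n → ℤ) : Set (ES n) :=
  {x | ∀ j, x j ∈ Set.Icc (qd j * z j) (qd j * z j + qd j)}

def gridG (n : ℕ) (qd : Fin n → ℝ) : Set (ES n) :=
  {x | ∃ j : Fin n, ∃ m : ℤ, x j = qd j * m}

lemma perfDom_eq_compl {n : ℕ} (qd : Fin n → ℝ) (I : Set (ES n)) :
    perfDom n qd I = (⋃ z : Fin n → ℤ, holeH n qd I z)ᶜ := rfl

lemma holeH_eq {n : ℕ} (qd : Fin n → ℝ) (I : Set (ES n)) (z : Fin n → ℤ) :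
    holeH n qd I z = (latticePt n qd z + ·) '' closure I := by
  unfold holeH
  have h1 : (latticePt n qd z + ·) = ⇑(Homeomorph.addLeft (latticePt n qd z)) := by
    rw [Homeomorph.coe_addLeft]
  rw [h1, ← Homeomorph.image_closure]

lemma mem_holeH_iff {n : ℕ} (qd : Fin n → ℝ) (I : Set (ES n)) (z : Fin n → ℤ) (x : ES n) :
    x ∈ holeH n qd I z ↔ x - latticePt n qd z ∈ closure I := by
  rw [holeH_eq]
  constructor
  · rintro ⟨k, hk, rfl⟩
    simpa using hk
  · intro h
    refine ⟨x - latticePt n qd z, h, ?_⟩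
    simp

lemma holeH_coord {n : ℕ} {qd : Fin n → ℝ} {I : Set (ES n)}
    (hIQ : closure I ⊆ cellQ n qd) {z : Fin n → ℤ} {x : ES n}
    (hx : x ∈ holeH n qd I z) (j : Fin n) :
    qd j * z j < x j ∧ x j < qd j * z j + qd j := by
  rw [mem_holeH_iff] at hx
  have h := hIQ hx j
  have hsub : (x - latticePt n qd z) j = x j - qd j * z j := rfl
  rw [hsub] at h
  rcases h with ⟨h1, h2⟩
  constructor <;> linarith

lemma not_mem_holeH_of_grid_coord {n : ℕ} {qd : Fin n → ℝ} (hqd : ∀ j, 0 < qd j)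
    {I : Set (ES n)} (hIQ : closure I ⊆ cellQ n qd) {x : ES n}
    {j : Fin n} {m : ℤ} (hj : x j = qd j * m) (z : Fin n → ℤ) :
    x ∉ holeH n qd I z := by
  intro hx
  obtain ⟨h1, h2⟩ := holeH_coord hIQ hx j
  rw [hj] at h1 h2
  have hq := hqd j
  have hlt1 : (z j : ℝ) < m := lt_of_mul_lt_mul_left h1 hq.le
  have hlt2 : (m : ℝ) < z j + 1 := by
    have h3 : qd j * m < qd j * (z j + 1) := by nlinarith
    exact lt_of_mul_lt_mul_left h3 hq.le
  have hi1 : z j < m := by exact_mod_cast hlt1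
  have hi2 : m < z j + 1 := by exact_mod_cast hlt2
  omega

lemma gridG_subset_perfDom {n : ℕ} {qd : Fin n → ℝ} (hqd : ∀ j, 0 < qd j)
    {I : Set (ES n)} (hIQ : closure I ⊆ cellQ n qd) :
    gridG n qd ⊆ perfDom n qd I := by
  rintro x ⟨j, m, hj⟩
  rw [perfDom_eq_compl]
  simp only [Set.mem_compl_iff, Set.mem_iUnion, not_exists]
  exact fun z => not_mem_holeH_of_grid_coord hqd hIQ hj z

lemma cell_diff_subset_perfDom {n : ℕ} {qd : Fin n → ℝ} (hqd : ∀ j, 0 < qd j)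
    {I : Set (ES n)} (hIQ : closure I ⊆ cellQ n qd) (z : Fin n → ℤ) :
    cellC n qd z \ holeH n qd I z ⊆ perfDom n qd I := by
  rintro x ⟨hxc, hxh⟩
  rw [perfDom_eq_compl]
  simp only [Set.mem_compl_iff, Set.mem_iUnion, not_exists]
  intro z' hx'
  by_cases hzz : z' = z
  · exact hxh (hzz ▸ hx')
  · have hj : ∃ j, z' j ≠ z j := by
      by_contra hcon
      push_neg at hcon
      exact hzz (funext hcon)
    obtain ⟨j, hjne⟩ := hj
    obtain ⟨h1, h2⟩ := holeH_coord hIQ hx' j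
    have hc := hxc j
    have hq := hqd j
    rcases lt_or_gt_of_ne hjne with hlt | hgt
    · -- z' j < z j, so x j < qd j * (z' j + 1) ≤ qd j * z j ≤ x j
      have : (z' j : ℝ) + 1 ≤ z j := by exact_mod_cast hlt
      have h3 : qd j * (z' j + 1) ≤ qd j * z j := by nlinarith
      have := hc.1
      nlinarith
    · have : (z j : ℝ) + 1 ≤ z' j := by exact_mod_cast hgt
      have h3 : qd j * (z j + 1) ≤ qd j * z' j := by nlinarith
      have := hc.2
      nlinarith

lemma perfDom_subset_union {n : ℕ} {qd : Fin n → ℝ} (hqd : ∀ j, 0 < qd j)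
    (I : Set (ES n)) :
    perfDom n qd I ⊆ gridG n qd ∪ ⋃ z : Fin n → ℤ, (cellC n qd z \ holeH n qd I z) := by
  intro x hx
  by_cases hg : x ∈ gridG n qd
  · exact Or.inl hg
  · right
    simp only [gridG, Set.mem_setOf_eq, not_exists] at hg
    set z : Fin n → ℤ := fun j => ⌊x j / qd j⌋ with hz
    refine Set.mem_iUnion.mpr ⟨z, ⟨?_, ?_⟩⟩
    · intro j
      have hq := hqd j
      have h1 : (⌊x j / qd j⌋ : ℝ) ≤ x j / qd j := Int.floor_le _
      have h2 : x j / qd j < ⌊x j / qd j⌋ + 1 := Int.lt_floor_add_one _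
      constructor
      · have := mul_le_mul_of_nonneg_left h1 hq.le
        rw [mul_div_cancel₀ _ hq.ne'] at this
        exact this
      · have := mul_lt_mul_of_pos_left h2 hq
        rw [mul_div_cancel₀ _ hq.ne'] at this
        simp only [hz]
        nlinarith
    · intro hcon
      rw [perfDom_eq_compl] at hx
      exact hx (Set.mem_iUnion.mpr ⟨z, hcon⟩)

lemma isOpen_coord_set {n : ℕ} (s : Fin n → Set ℝ) (hs : ∀ j, IsOpen (s j)) :
    IsOpen {x : ES n | ∀ j, x j ∈ s j} := by
  have : {x : ES n | ∀ j, x j ∈ s j} = ⋂ j, (fun x : ES n => x j) ⁻¹' (s j) := by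
    ext x; simp
  rw [this]
  refine isOpen_iInter_of_finite fun j => ?_
  have hc : Continuous (fun x : ES n => x j) := (EuclideanSpace.proj (𝕜 := ℝ) j).continuous
  exact (hs j).preimage hc

lemma isOpen_cellQ {n : ℕ} (qd : Fin n → ℝ) : IsOpen (cellQ n qd) :=
  isOpen_coord_set _ (fun j => isOpen_Ioo)

lemma perfDom_isOpen {n : ℕ} {qd : Fin n → ℝ} (hqd : ∀ j, 0 < qd j)
    {I : Set (ES n)} (hIb : Bornology.IsBounded I) (hIQ : closure I ⊆ cellQ n qd) :
    IsOpen (perfDom n qd I) := by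
  have hK : IsCompact (closure I) :=
    Metric.isCompact_of_isClosed_isBounded isClosed_closure hIb.closure
  obtain ⟨δ, hδpos, hδ⟩ := hK.exists_cthickening_subset_open (isOpen_cellQ qd) hIQ
  rw [isOpen_iff_mem_nhds]
  intro x hx
  by_cases hg : x ∈ gridG n qd
  · -- a ball of radius δ around a grid point avoids all holes
    obtain ⟨j, m, hj⟩ := hg
    have hball : Metric.ball x δ ⊆ perfDom n qd I := by
      intro y hy
      rw [perfDom_eq_compl]
      simp only [Set.mem_compl_iff, Set.mem_iUnion, not_exists]
      intro z hyz
      rw [mem_holeH_iff] at hyz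
      have hxz : x - latticePt n qd z ∈ Metric.cthickening δ (closure I) := by
        apply Metric.mem_cthickening_of_dist_le _ (y - latticePt n qd z) δ _ hyz
        rw [dist_sub_right]
        exact (Metric.mem_ball'.mp hy).le
      have hmem := hδ hxz j
      have hsub : (x - latticePt n qd z) j = x j - qd j * z j := rfl
      rw [hsub, hj] at hmem
      obtain ⟨h1, h2⟩ := hmem
      have hq := hqd j
      have hi1 : z j < m := by
        have : (z j : ℝ) < m := lt_of_mul_lt_mul_left (by linarith) hq.le
        exact_mod_cast this
      have hi2 : m < z j + 1 := by
        have h3 : qd j * m < qd j * ((z j : ℝ) + 1) := by nlinarith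
        have h4 := lt_of_mul_lt_mul_left h3 hq.le
        exact_mod_cast h4
      omega
    exact Filter.mem_of_superset (Metric.ball_mem_nhds x hδpos) hball
  · simp only [gridG, Set.mem_setOf_eq, not_exists] at hg
    set z : Fin n → ℤ := fun j => ⌊x j / qd j⌋ with hz
    set V : Set (ES n) := {y : ES n | ∀ j, y j ∈ Set.Ioo (qd j * z j) (qd j * z j + qd j)}
      \ holeH n qd I z with hV
    have hVopen : IsOpen V :=
      (isOpen_coord_set _ (fun j => isOpen_Ioo)).sdiff isClosed_closure
    have hxV : x ∈ V := by
      constructor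
      · intro j
        have hq := hqd j
        have h1 : (⌊x j / qd j⌋ : ℝ) ≤ x j / qd j := Int.floor_le _
        have h2 : x j / qd j < ⌊x j / qd j⌋ + 1 := Int.lt_floor_add_one _
        have hne : x j ≠ qd j * z j := hg j (z j)
        have hle : qd j * z j ≤ x j := by
          have := mul_le_mul_of_nonneg_left h1 hq.le
          rw [mul_div_cancel₀ _ hq.ne'] at this
          exact this
        constructor
        · exact lt_of_le_of_ne hle (Ne.symm hne)
        · have := mul_lt_mul_of_pos_left h2 hq
          rw [mul_div_cancel₀ _ hq.ne'] at this
          simp only [hz]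
          nlinarith
      · intro hcon
        rw [perfDom_eq_compl] at hx
        exact hx (Set.mem_iUnion.mpr ⟨z, hcon⟩)
    have hVsub : V ⊆ perfDom n qd I := by
      intro y hy
      apply cell_diff_subset_perfDom hqd hIQ z
      exact ⟨fun j => ⟨(hy.1 j).1.le, (hy.1 j).2.le⟩, hy.2⟩
    exact Filter.mem_of_superset (hVopen.mem_nhds hxV) hVsub


def clampC {n : ℕ} (qd : Fin n → ℝ) (z : Fin n → ℤ) (x : ES n) : ES n :=
  WithLp.toLp 2 (fun j => qd j * z j + max 0 (min (x j - qd j * z j) (qd j)))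

lemma continuous_clampC {n : ℕ} (qd : Fin n → ℝ) (z : Fin n → ℤ) :
    Continuous (clampC qd z) := by
  have h : Continuous fun (x : ES n) (j : Fin n) =>
      qd j * z j + max 0 (min (x j - qd j * z j) (qd j)) := by
    apply continuous_pi
    intro j
    have hc : Continuous (fun x : ES n => x j) := (EuclideanSpace.proj (𝕜 := ℝ) j).continuous
    exact continuous_const.add
      (continuous_const.max ((hc.sub continuous_const).min continuous_const))
  exact (PiLp.continuous_toLp 2 (fun _ : Fin n => ℝ)).comp h

lemma clampC_eq_self {n : ℕ} {qd : Fin n → ℝ} {z : Fin n → ℤ} {x : ES n}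
    (hx : ∀ j, qd j * z j ≤ x j ∧ x j ≤ qd j * z j + qd j) : clampC qd z x = x := by
  refine PiLp.ext fun j => ?_
  have h1 := (hx j).1
  have h2 := (hx j).2
  simp only [clampC, PiLp.toLp_apply]
  rw [min_eq_left (by linarith), max_eq_right (by linarith)]
  ring

lemma clampC_mem_cellC {n : ℕ} {qd : Fin n → ℝ} (hqd : ∀ j, 0 < qd j)
    (z : Fin n → ℤ) (x : ES n) : clampC qd z x ∈ cellC n qd z := by
  intro j
  simp only [clampC, PiLp.toLp_apply]
  constructor
  · have := le_max_left (0:ℝ) (min (x j - qd j * z j) (qd j))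
    linarith
  · have h1 : min (x j - qd j * z j) (qd j) ≤ qd j := min_le_right _ _
    have h2 : max 0 (min (x j - qd j * z j) (qd j)) ≤ qd j :=
      max_le (hqd j).le h1
    linarith

lemma clampC_image {n : ℕ} {qd : Fin n → ℝ} (hqd : ∀ j, 0 < qd j)
    {I : Set (ES n)} (hIQ : closure I ⊆ cellQ n qd) (z : Fin n → ℤ) :
    clampC qd z '' (holeH n qd I z)ᶜ = cellC n qd z \ holeH n qd I z := by
  apply Set.Subset.antisymm
  · rintro _ ⟨x, hx, rfl⟩
    refine ⟨clampC_mem_cellC hqd z x, ?_⟩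
    by_cases hcx : ∀ j, clampC qd z x j = x j
    · have : clampC qd z x = x := PiLp.ext hcx
      rw [this]; exact hx
    · push_neg at hcx
      obtain ⟨j, hj⟩ := hcx
      intro hcon
      -- the clamped coordinate is an endpoint, contradicting that holes avoid cell walls
      obtain ⟨h1, h2⟩ := holeH_coord hIQ hcon j
      simp only [clampC, PiLp.toLp_apply] at hj h1 h2
      rcases le_or_gt (x j - qd j * z j) 0 with hle | hgt
      · have : min (x j - qd j * z j) (qd j) ≤ 0 := le_trans (min_le_left _ _) hle
        rw [max_eq_left this] at h1 h2 hj
        linarith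
      · rcases le_or_gt (x j - qd j * z j) (qd j) with hle2 | hgt2
        · rw [min_eq_left hle2, max_eq_right hgt.le] at hj
          exact hj (by ring)
        · rw [min_eq_right hgt2.le, max_eq_right (hqd j).le] at h1 h2 hj
          linarith
  · rintro x ⟨hxc, hxh⟩
    refine ⟨x, hxh, ?_⟩
    exact clampC_eq_self (fun j => ⟨(hxc j).1, (hxc j).2⟩)

lemma isPreconnected_cell_diff {n : ℕ} {qd : Fin n → ℝ} (hqd : ∀ j, 0 < qd j)
    {I : Set (ES n)} (hIext : IsConnected (closure I)ᶜ)
    (hIQ : closure I ⊆ cellQ n qd) (z : Fin n → ℤ) :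
    IsPreconnected (cellC n qd z \ holeH n qd I z) := by
  rw [← clampC_image hqd hIQ z]
  apply IsPreconnected.image _ _ ((continuous_clampC qd z).continuousOn)
  -- (holeH z)ᶜ is the image of (closure I)ᶜ under translation
  have himg : (holeH n qd I z)ᶜ = (latticePt n qd z + ·) '' (closure I)ᶜ := by
    rw [holeH_eq]
    apply Set.Subset.antisymm
    · intro x hx
      refine ⟨x - latticePt n qd z, ?_, by simp⟩
      intro hcon
      exact hx ⟨x - latticePt n qd z, hcon, by simp⟩
    · rintro _ ⟨k, hk, rfl⟩ ⟨k', hk', heq⟩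
      have : k' = k := by
        have := add_left_cancel heq
        exact this
      exact hk (this ▸ hk')
  rw [himg]
  exact hIext.isPreconnected.image _ ((continuous_const.add continuous_id).continuousOn)

lemma isPreconnected_gridG {n : ℕ} (hn : 2 ≤ n) (qd : Fin n → ℝ) :
    IsPreconnected (gridG n qd) := by
  have h0 : (0:ℕ) < n := by omega
  have h1 : (1:ℕ) < n := by omega
  set j₀ : Fin n := ⟨0, h0⟩
  set j₁ : Fin n := ⟨1, h1⟩
  have hj01 : j₀ ≠ j₁ := by
    simp only [j₀, j₁, Fin.mk.injEq, Ne]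
    omega
  set hyper : Fin n → ℤ → Set (ES n) := fun j m => {x : ES n | x j = qd j * m} with hhyper
  have hconv : ∀ j m, Convex ℝ (hyper j m) := by
    intro j m x hx y hy a b ha hb hab
    have hax : (a • x + b • y) j = a * x j + b * y j := rfl
    simp only [hyper, Set.mem_setOf_eq] at hx hy ⊢
    rw [hax, hx, hy]
    have : a * (qd j * m) + b * (qd j * m) = (a + b) * (qd j * m) := by ring
    rw [this, hab, one_mul]
  have hpre : ∀ j m, IsPreconnected (hyper j m) := fun j m => (hconv j m).isPreconnected
  set other : Fin n → Fin n := fun j => if j = j₀ then j₁ else j₀ with hother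
  have hother_ne : ∀ j, other j ≠ j := by
    intro j
    by_cases hj : j = j₀
    · subst hj
      show (if j₀ = j₀ then j₁ else j₀) ≠ j₀
      simp only [if_pos rfl]
      exact hj01.symm
    · show (if j = j₀ then j₁ else j₀) ≠ j
      rw [if_neg hj]
      exact fun h => hj h.symm
  set piece : Fin n × ℤ → Set (ES n) := fun p => hyper p.1 p.2 ∪ hyper (other p.1) 0
    with hpiece
  have hzero : ∀ p : Fin n × ℤ, (0 : ES n) ∈ piece p := by
    intro p
    right
    show (0 : ES n) (other p.1) = qd (other p.1) * (0:ℤ)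
    simp
  have hpiece_pre : ∀ p : Fin n × ℤ, IsPreconnected (piece p) := by
    intro p
    apply IsPreconnected.union (WithLp.toLp 2 (fun i => if i = p.1 then qd p.1 * p.2 else 0))
    · show (WithLp.toLp 2 (fun i => if i = p.1 then qd p.1 * (p.2:ℝ) else 0)) p.1 = qd p.1 * p.2
      simp
    · show (WithLp.toLp 2 (fun i => if i = p.1 then qd p.1 * (p.2:ℝ) else 0)) (other p.1)
        = qd (other p.1) * ((0:ℤ):ℝ)
      simp [hother_ne p.1]
    · exact hpre p.1 p.2
    · exact hpre (other p.1) 0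
  have hunion : gridG n qd = ⋃ p : Fin n × ℤ, piece p := by
    apply Set.Subset.antisymm
    · rintro x ⟨j, m, hj⟩
      exact Set.mem_iUnion.mpr ⟨⟨j, m⟩, Or.inl hj⟩
    · intro x hx
      obtain ⟨p, hp⟩ := Set.mem_iUnion.mp hx
      rcases hp with h | h
      · exact ⟨p.1, p.2, h⟩
      · refine ⟨other p.1, 0, ?_⟩
        have : x (other p.1) = qd (other p.1) * ((0:ℤ):ℝ) := h
        exact this
  rw [hunion, ← Set.sUnion_range]
  apply isPreconnected_sUnion 0
  · rintro s ⟨p, rfl⟩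
    exact hzero p
  · rintro s ⟨p, rfl⟩
    exact hpiece_pre p

lemma isPreconnected_perfDom {n : ℕ} (hn : 2 ≤ n) {qd : Fin n → ℝ} (hqd : ∀ j, 0 < qd j)
    {I : Set (ES n)} (hIext : IsConnected (closure I)ᶜ)
    (hIQ : closure I ⊆ cellQ n qd) :
    IsPreconnected (perfDom n qd I) := by
  have h0 : (0:ℕ) < n := by omega
  set j₀ : Fin n := ⟨0, h0⟩
  set A : (Fin n → ℤ) → Set (ES n) :=
    fun z => (cellC n qd z \ holeH n qd I z) ∪ gridG n qd with hA
  have hlat_grid : ∀ z : Fin n → ℤ, latticePt n qd z ∈ gridG n qd := by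
    intro z
    exact ⟨j₀, z j₀, rfl⟩
  have hlat_cell : ∀ z : Fin n → ℤ, latticePt n qd z ∈ cellC n qd z \ holeH n qd I z := by
    intro z
    constructor
    · intro j
      have hq := hqd j
      constructor
      · exact le_refl _
      · show qd j * z j ≤ qd j * z j + qd j
        linarith
    · exact not_mem_holeH_of_grid_coord hqd hIQ (rfl : latticePt n qd z j₀ = qd j₀ * z j₀) z
  have hApre : ∀ z, IsPreconnected (A z) := by
    intro z
    exact IsPreconnected.union (latticePt n qd z) (hlat_cell z) (hlat_grid z)
      (isPreconnected_cell_diff hqd hIext hIQ z) (isPreconnected_gridG hn qd)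
  have hzeroA : ∀ z, (0 : ES n) ∈ A z := by
    intro z
    right
    exact ⟨j₀, 0, by simp⟩
  have hunion : perfDom n qd I = ⋃ z : Fin n → ℤ, A z := by
    apply Set.Subset.antisymm
    · intro x hx
      rcases perfDom_subset_union hqd I hx with h | h
      · exact Set.mem_iUnion.mpr ⟨fun _ => 0, Or.inr h⟩
      · obtain ⟨z, hz⟩ := Set.mem_iUnion.mp h
        exact Set.mem_iUnion.mpr ⟨z, Or.inl hz⟩
    · intro x hx
      obtain ⟨z, hz⟩ := Set.mem_iUnion.mp hx
      rcases hz with h | h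
      · exact cell_diff_subset_perfDom hqd hIQ z h
      · exact gridG_subset_perfDom hqd hIQ h
  rw [hunion, ← Set.sUnion_range]
  apply isPreconnected_sUnion 0
  · rintro s ⟨z, rfl⟩
    exact hzeroA z
  · rintro s ⟨z, rfl⟩
    exact hApre z

/-- Maximum principle in the periodically perforated domain: a continuous `q`-periodic
function, harmonic in `𝕊[𝕀]⁻`, attaining its maximum at an interior point of `𝕊[𝕀]⁻`,
is constant in `𝕊[𝕀]⁻`. -/
theorem periodic_maximum_principle_max
    (n : ℕ) (hn : 2 ≤ n) (qd : Fin n → ℝ) (hqd : ∀ j, 0 < qd j)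
    (I : Set (EuclideanSpace ℝ (Fin n)))
    (hIne : I.Nonempty) (hIo : IsOpen I) (hIb : Bornology.IsBounded I)
    (hIconn : IsConnected I) (hIext : IsConnected (closure I)ᶜ)
    (hIQ : closure I ⊆ cellQ n qd)
    (u : EuclideanSpace ℝ (Fin n) → ℝ)
    (hu : ContinuousOn u (closure (perfDom n qd I)))
    (hper : ∀ x ∈ closure (perfDom n qd I), ∀ j : Fin n,
      u (x + EuclideanSpace.single j (qd j)) = u x)
    (hC2 : ContDiffOn ℝ 2 u (perfDom n qd I))
    (hharm : ∀ x ∈ perfDom n qd I, laplacian n u x = 0)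
    (x₀ : EuclideanSpace ℝ (Fin n)) (hx₀ : x₀ ∈ perfDom n qd I)
    (hmax : ∀ x ∈ closure (perfDom n qd I), u x ≤ u x₀) :
    ∀ x ∈ perfDom n qd I, u x = u x₀ := by
  set U := perfDom n qd I with hUdef
  have hUopen : IsOpen U := perfDom_isOpen hqd hIb hIQ
  have hUconn : IsPreconnected U := isPreconnected_perfDom hn hqd hIext hIQ
  set M := u x₀ with hM
  have hn' : 0 < n := by omega
  have hSopen : IsOpen {x | x ∈ U ∧ u x = M} := by
    rw [Metric.isOpen_iff]
    rintro x ⟨hxU, hxM⟩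
    obtain ⟨ρ, hρpos, hρ⟩ := Metric.isOpen_iff.mp hUopen x hxU
    refine ⟨ρ/8, by positivity, ?_⟩
    intro y hy
    have hyx : dist y x < ρ/8 := Metric.mem_ball.mp hy
    have hyU : y ∈ U := hρ (Metric.mem_ball.mpr (by linarith))
    refine ⟨hyU, ?_⟩
    by_contra hne
    have hylt : u y < M := lt_of_le_of_ne (hmax y (subset_closure hyU)) hne
    set N : Set (EuclideanSpace ℝ (Fin n)) := U ∩ u ⁻¹' (Set.Iio M) with hN
    have hNopen : IsOpen N :=
      (hu.mono subset_closure).isOpen_inter_preimage hUopen isOpen_Iio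
    have hyN : y ∈ N := ⟨hyU, hylt⟩
    have hxNc : x ∈ (Nᶜ : Set (EuclideanSpace ℝ (Fin n))) :=
      fun hc => absurd hxM (ne_of_lt hc.2)
    have hNcne : (Nᶜ : Set (EuclideanSpace ℝ (Fin n))).Nonempty := ⟨x, hxNc⟩
    have hNccl : IsClosed (Nᶜ : Set (EuclideanSpace ℝ (Fin n))) := hNopen.isClosed_compl
    set r := Metric.infDist y Nᶜ with hr
    have hrpos : 0 < r := by
      rw [hr]
      exact (hNccl.notMem_iff_infDist_pos hNcne).mp (fun hc => hc hyN)
    have hrle : r ≤ dist y x := Metric.infDist_le_dist_of_mem hxNc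
    have hballN : Metric.ball y r ⊆ N := by
      intro z hz
      by_contra hzc
      have h1 : r ≤ dist y z := Metric.infDist_le_dist_of_mem hzc
      have h2 : dist z y < r := Metric.mem_ball.mp hz
      rw [dist_comm] at h2
      linarith
    obtain ⟨p, hpNc, hpd⟩ := hNccl.exists_infDist_eq_dist hNcne y
    have hpr : dist p y = r := by rw [dist_comm, ← hpd]
    have hpU : p ∈ U := by
      apply hρ
      rw [Metric.mem_ball]
      have h1 : dist p x ≤ dist p y + dist y x := dist_triangle p y x
      rw [hpr] at h1
      linarith
    have hpM : u p = M := by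
      have h1 : ¬ u p < M := fun hlt => hpNc ⟨hpU, hlt⟩
      exact le_antisymm (hmax p (subset_closure hpU)) (not_lt.mp h1)
    have hballU : Metric.ball y r ⊆ U := fun z hz => (hballN hz).1
    have hballlt : ∀ z ∈ Metric.ball y r, u z < M := fun z hz => (hballN hz).2
    exact hopf hn' hUopen hu hC2 hharm hmax hrpos hballU hballlt hpU hpr hpM
  set N : Set (EuclideanSpace ℝ (Fin n)) := U ∩ u ⁻¹' (Set.Iio M) with hN
  have hNopen : IsOpen N :=
    (hu.mono subset_closure).isOpen_inter_preimage hUopen isOpen_Iio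
  intro x hxU
  by_contra hne
  have hxN : x ∈ N := ⟨hxU, lt_of_le_of_ne (hmax x (subset_closure hxU)) hne⟩
  have hcover : U ⊆ {x | x ∈ U ∧ u x = M} ∪ N := by
    intro z hz
    rcases lt_or_eq_of_le (hmax z (subset_closure hz)) with h | h
    · right; exact ⟨hz, h⟩
    · left; exact ⟨hz, h⟩
  have h1 : (U ∩ {x | x ∈ U ∧ u x = M}).Nonempty := ⟨x₀, hx₀, hx₀, rfl⟩
  have h2 : (U ∩ N).Nonempty := ⟨x, hxU, hxN⟩
  obtain ⟨w', hw'⟩ := hUconn _ _ hSopen hNopen hcover h1 h2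
  exact absurd hw'.2.1.2 (ne_of_lt hw'.2.2.2)
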